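/- (Zassenhaus' theorem) Let n ∈ ℕ, let r > 1, and set Ω = {x ∈ GL_n(ℂ) : ‖x − 1‖ < 1/(8r)}, where ‖·‖ is the operator norm on n×n complex matrices and 1 is the identity matrix. If Γ is a discrete subgroup of GL_n(ℂ) (discrete in the subspace topology induced from the norm topology on matrices) which is generated by Γ ∩ Ω, then Γ is a nilpotent group. -/

import Mathlib

set_option maxHeartbeats 1000000

open scoped commutatorElement

/-- The operator norm of an `n × n` complex matrix, i.e. the norm of the corresponding
bounded operator on the Euclidean space `ℂⁿ`. -/
noncomputable def matrixOpNorm {n : ℕ} (A : Matrix (Fin n) (Fin n) ℂ) : ℝ :=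
  ‖Matrix.toEuclideanCLM (𝕜 := ℂ) A‖

namespace ZassenhausAux

/-! ### Group theory: iterated commutators and nilpotency -/

open Subgroup

variable {G : Type*} [Group G]

/-- Iterated left-normed commutators of weight `k+1` in elements of `T`. -/
def itC (T : Set G) : ℕ → Set G
  | 0 => T
  | k+1 => {x | ∃ c ∈ itC T k, ∃ s ∈ T, x = ⁅c, s⁆}

theorem lcs_le_normalClosure_itC (T : Set G) (hT : Subgroup.closure T = ⊤) (k : ℕ) :
    (⊤ : Subgroup G).lowerCentralSeries k ≤ Subgroup.normalClosure (itC T k) := by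
  induction k with
  | zero =>
      exact le_trans (le_of_eq hT.symm) closure_le_normalClosure
  | succ k ih =>
      set N : Subgroup G := Subgroup.normalClosure (itC T (k+1)) with hN
      have hNnormal : N.Normal := Subgroup.normalClosure_normal
      rw [Subgroup.lowerCentralSeries_succ]
      rw [Subgroup.commutator_def, Subgroup.closure_le]
      rintro x ⟨p, hp, q, -, rfl⟩
      have hp' : p ∈ Subgroup.normalClosure (itC T k) := ih hp
      -- work in the quotient by N
      let π := QuotientGroup.mk' N
      have hπsurj : Function.Surjective π := QuotientGroup.mk'_surjective N
      have hker : ∀ y : G, π y = 1 ↔ y ∈ N := by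
        intro y
        rw [← MonoidHom.mem_ker, QuotientGroup.ker_mk']
      -- the image of `itC T k` is central in the quotient
      have hcent : ∀ c ∈ itC T k, π c ∈ Subgroup.center (G ⧸ N) := by
        intro c hc
        rw [Subgroup.mem_center_iff]
        intro g
        have hg : g ∈ Subgroup.closure (π '' T) := by
          have : Subgroup.closure (π '' T) = ⊤ := by
            rw [← MonoidHom.map_closure, hT, Subgroup.map_top_of_surjective _ hπsurj]
          rw [this]; trivial
        induction hg using Subgroup.closure_induction with
        | mem y hy =>
            obtain ⟨s, hs, rfl⟩ := hy
            have : ⁅c, s⁆ ∈ N := Subgroup.subset_normalClosure ⟨c, hc, s, hs, rfl⟩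
            have h1 : π ⁅c, s⁆ = 1 := (hker _).mpr this
            rw [map_commutatorElement] at h1
            exact (commutatorElement_eq_one_iff_mul_comm.mp h1).symm
        | one => simp
        | mul y z hy hz hy' hz' => rw [mul_assoc, hz', ← mul_assoc, hy', mul_assoc]
        | inv y hy hy' =>
            have : Commute (π c) y := hy'.symm
            exact (this.inv_right).symm.eq
      -- hence the image of the normal closure is central
      have hmap : Subgroup.map π (Subgroup.normalClosure (itC T k)) ≤
          Subgroup.center (G ⧸ N) := by
        rw [Subgroup.map_normalClosure _ _ hπsurj]
        refine Subgroup.normalClosure_le_normal ?_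
        rintro y ⟨c, hc, rfl⟩
        exact hcent c hc
      have hπp : π p ∈ Subgroup.center (G ⧸ N) := hmap ⟨p, hp', rfl⟩
      have : π ⁅p, q⁆ = 1 := by
        rw [map_commutatorElement, commutatorElement_eq_one_iff_mul_comm]
        exact (Subgroup.mem_center_iff.mp hπp (π q)).symm
      exact (hker _).mp this

theorem isNilpotent_of_itC (T : Set G) (hT : Subgroup.closure T = ⊤) (m : ℕ)
    (h : ∀ x ∈ itC T m, x = 1) : Group.IsNilpotent G := by
  rw [Subgroup.nilpotent_iff_lowerCentralSeries]
  refine ⟨m, le_antisymm ?_ bot_le⟩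
  refine le_trans (lcs_le_normalClosure_itC T hT m) ?_
  refine Subgroup.normalClosure_le_normal ?_
  intro x hx
  rw [h x hx]
  exact Subgroup.one_mem ⊥

/-! ### Analysis: norm estimates for commutators -/

section NormedRing

variable {R : Type*} [NormedRing R]

lemma inv_est (hone : ‖(1 : R)‖ ≤ 1) (u v : R) (hvu : v * u = 1)
    (h : ‖u - 1‖ ≤ 1 / 8) : ‖v‖ ≤ 8 / 7 := by
  have h1 : v - 1 = v * (1 - u) := by rw [mul_sub, mul_one, hvu]
  have h2 : ‖v‖ ≤ ‖v - 1‖ + ‖(1 : R)‖ := by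
    have := norm_add_le (v - 1) (1 : R)
    rwa [sub_add_cancel] at this
  have h4 : ‖v - 1‖ ≤ ‖v‖ * ‖1 - u‖ := by rw [h1]; exact norm_mul_le _ _
  have h5 : ‖1 - u‖ = ‖u - 1‖ := norm_sub_rev _ _
  have h6 : ‖v‖ * ‖1 - u‖ ≤ ‖v‖ * (1 / 8) := by
    rw [h5]; exact mul_le_mul_of_nonneg_left h (norm_nonneg _)
  linarith

lemma comm_est' (A B A' B' : R) (hAA' : A * A' = 1) (hBB' : B * B' = 1)
    (hb : ‖B - 1‖ ≤ 1 / 8) (hA' : ‖A'‖ ≤ 8 / 7) (hB' : ‖B'‖ ≤ 8 / 7) :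
    ‖A * B * A' * B' - 1‖ ≤ (1 / 2) * ‖A - 1‖ := by
  have key : A * B * A' * B' - 1 = ((A - 1) * (B - 1) - (B - 1) * (A - 1)) * (A' * B') := by
    have h2 : (A - 1) * (B - 1) - (B - 1) * (A - 1) = A * B - B * A := by noncomm_ring
    have e : B * A * (A' * B') = 1 := by
      rw [mul_assoc B A (A' * B'), ← mul_assoc A A' B', hAA', one_mul, hBB']
    have e' : A * B * (A' * B') = A * B * A' * B' := (mul_assoc (A * B) A' B').symm
    rw [h2, sub_mul, e, e']
  have etot : ‖A * B * A' * B' - 1‖ ≤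
      (‖(A - 1) * (B - 1)‖ + ‖(B - 1) * (A - 1)‖) * (‖A'‖ * ‖B'‖) := by
    rw [key]
    refine le_trans (norm_mul_le _ _) ?_
    exact mul_le_mul (norm_sub_le _ _) (norm_mul_le _ _) (norm_nonneg _) (by positivity)
  have n1 : (0 : ℝ) ≤ ‖A - 1‖ := norm_nonneg _
  have n4 : (0 : ℝ) ≤ ‖B'‖ := norm_nonneg _
  have e1 : ‖(A - 1) * (B - 1)‖ ≤ ‖A - 1‖ * ‖B - 1‖ := norm_mul_le _ _
  have e2 : ‖(B - 1) * (A - 1)‖ ≤ ‖B - 1‖ * ‖A - 1‖ := norm_mul_le _ _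
  have m1 : ‖A - 1‖ * ‖B - 1‖ ≤ ‖A - 1‖ * (1 / 8) := mul_le_mul_of_nonneg_left hb n1
  have m2 : ‖B - 1‖ * ‖A - 1‖ ≤ (1 / 8) * ‖A - 1‖ := mul_le_mul_of_nonneg_right hb n1
  have h1 : ‖(A - 1) * (B - 1)‖ + ‖(B - 1) * (A - 1)‖ ≤ ‖A - 1‖ / 4 := by linarith
  have h2 : ‖A'‖ * ‖B'‖ ≤ 2 := by
    have := mul_le_mul hA' hB' n4 (by norm_num : (0:ℝ) ≤ 8 / 7)
    linarith
  have h3 : (‖(A - 1) * (B - 1)‖ + ‖(B - 1) * (A - 1)‖) * (‖A'‖ * ‖B'‖) ≤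
      (‖A - 1‖ / 4) * 2 :=
    mul_le_mul h1 h2 (by positivity) (by linarith)
  linarith

end NormedRing

/-- Matrix in `GL` as a continuous linear map on Euclidean space. -/
noncomputable def em {n : ℕ} (x : Matrix.GeneralLinearGroup (Fin n) ℂ) :
    EuclideanSpace ℂ (Fin n) →L[ℂ] EuclideanSpace ℂ (Fin n) :=
  Matrix.toEuclideanCLM (𝕜 := ℂ) (x : Matrix (Fin n) (Fin n) ℂ)

variable {n : ℕ}

lemma em_mul (x y : Matrix.GeneralLinearGroup (Fin n) ℂ) :
    em (x * y) = em x * em y := by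
  simp [em, Units.val_mul, map_mul]

lemma em_mul_inv (x : Matrix.GeneralLinearGroup (Fin n) ℂ) : em x * em x⁻¹ = 1 := by
  rw [em, em, ← map_mul, Units.mul_inv, map_one]

lemma em_inv_mul (x : Matrix.GeneralLinearGroup (Fin n) ℂ) : em x⁻¹ * em x = 1 := by
  rw [em, em, ← map_mul, Units.inv_mul, map_one]

lemma d_eq (x : Matrix.GeneralLinearGroup (Fin n) ℂ) :
    matrixOpNorm ((x : Matrix (Fin n) (Fin n) ℂ) - 1) = ‖em x - 1‖ := by
  rw [matrixOpNorm, em, map_sub, map_one]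

lemma norm_em_inv_le {x : Matrix.GeneralLinearGroup (Fin n) ℂ}
    (h : ‖em x - 1‖ ≤ 1 / 8) : ‖em x⁻¹‖ ≤ 8 / 7 := by
  refine inv_est ?_ (em x) (em x⁻¹) (em_inv_mul x) h
  rw [ContinuousLinearMap.one_def]
  exact ContinuousLinearMap.norm_id_le

lemma comm_est (a b : Matrix.GeneralLinearGroup (Fin n) ℂ)
    (ha : ‖em a - 1‖ ≤ 1 / 8) (hb : ‖em b - 1‖ ≤ 1 / 8) :
    ‖em ⁅a, b⁆ - 1‖ ≤ (1 / 2) * ‖em a - 1‖ := by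
  have hcomm : em ⁅a, b⁆ = em a * em b * em a⁻¹ * em b⁻¹ := by
    rw [commutatorElement_def, em_mul, em_mul, em_mul]
  rw [hcomm]
  exact comm_est' _ _ _ _ (em_mul_inv a) (em_mul_inv b) hb
    (norm_em_inv_le ha) (norm_em_inv_le hb)

end ZassenhausAux

open ZassenhausAux in
/-- Zassenhaus' theorem: let `r > 1` and let
`Ω = {x ∈ GL_n(ℂ) : ‖x − 1‖ < 1/(8r)}` (operator norm). Every discrete subgroup of
`GL_n(ℂ)` generated by its intersection with `Ω` is nilpotent. -/
theorem zassenhaus {n : ℕ} (r : ℝ) (hr : 1 < r)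
    (Γ : Subgroup (Matrix.GeneralLinearGroup (Fin n) ℂ))
    (hdisc : ∀ γ ∈ Γ, ∃ ε > (0 : ℝ), ∀ δ ∈ Γ,
      matrixOpNorm ((δ : Matrix (Fin n) (Fin n) ℂ) - (γ : Matrix (Fin n) (Fin n) ℂ)) < ε →
        δ = γ)
    (hgen : Subgroup.closure
        ((Γ : Set (Matrix.GeneralLinearGroup (Fin n) ℂ)) ∩
          {x : Matrix.GeneralLinearGroup (Fin n) ℂ |
            matrixOpNorm ((x : Matrix (Fin n) (Fin n) ℂ) - 1) < 1 / (8 * r)}) = Γ) :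
    Group.IsNilpotent Γ := by
  -- the generating set, inside the subgroup
  set T : Set ↥Γ :=
    {g : ↥Γ | matrixOpNorm (((g : Matrix.GeneralLinearGroup (Fin n) ℂ) :
      Matrix (Fin n) (Fin n) ℂ) - 1) < 1 / (8 * r)} with hT
  have hr8 : 1 / (8 * r) ≤ 1 / 8 :=
    one_div_le_one_div_of_le (by norm_num) (by linarith)
  -- elements of T are 1/8-close to the identity
  have hT8 : ∀ g ∈ T, ‖em (g : Matrix.GeneralLinearGroup (Fin n) ℂ) - 1‖ ≤ 1 / 8 := by
    intro g hg
    rw [← d_eq]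
    exact le_trans (le_of_lt hg) hr8
  -- T generates Γ
  have hclos : Subgroup.closure T = ⊤ := by
    rw [eq_top_iff]
    rintro ⟨g, hg⟩ -
    have hg' : g ∈ Subgroup.closure ((Γ : Set (Matrix.GeneralLinearGroup (Fin n) ℂ)) ∩
        {x : Matrix.GeneralLinearGroup (Fin n) ℂ |
          matrixOpNorm ((x : Matrix (Fin n) (Fin n) ℂ) - 1) < 1 / (8 * r)}) := by
      rw [hgen]; exact hg
    refine Subgroup.closure_induction
      (p := fun x _ => ∀ h : x ∈ Γ, (⟨x, h⟩ : ↥Γ) ∈ Subgroup.closure T)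
      ?_ ?_ ?_ ?_ hg' hg
    · intro x hx h
      exact Subgroup.subset_closure hx.2
    · intro h
      exact Subgroup.one_mem _
    · intro x y hx hy px py h
      have hxΓ : x ∈ Γ := by rw [← hgen]; exact hx
      have hyΓ : y ∈ Γ := by rw [← hgen]; exact hy
      have : (⟨x * y, h⟩ : ↥Γ) = ⟨x, hxΓ⟩ * ⟨y, hyΓ⟩ := rfl
      rw [this]
      exact mul_mem (px hxΓ) (py hyΓ)
    · intro x hx px h
      have hxΓ : x ∈ Γ := by rw [← hgen]; exact hx
      have : (⟨x⁻¹, h⟩ : ↥Γ) = (⟨x, hxΓ⟩ : ↥Γ)⁻¹ := rfl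
      rw [this]
      exact inv_mem (px hxΓ)
  -- iterated commutators contract to the identity
  have hbound : ∀ k, ∀ x ∈ itC T k,
      ‖em ((x : ↥Γ) : Matrix.GeneralLinearGroup (Fin n) ℂ) - 1‖ ≤ (1 / 8) * (1 / 2) ^ k := by
    intro k
    induction k with
    | zero =>
        intro x hx
        rw [pow_zero, mul_one]
        exact hT8 x hx
    | succ k ih =>
        rintro x ⟨c, hc, s, hs, rfl⟩
        have hcb := ih c hc
        have hpow : ((1 : ℝ) / 2) ^ k ≤ 1 := pow_le_one₀ (by norm_num) (by norm_num)
        have hc8 : ‖em (c : Matrix.GeneralLinearGroup (Fin n) ℂ) - 1‖ ≤ 1 / 8 := by nlinarith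
        have hs8 : ‖em (s : Matrix.GeneralLinearGroup (Fin n) ℂ) - 1‖ ≤ 1 / 8 := hT8 s hs
        have hcoe : ((⁅c, s⁆ : ↥Γ) : Matrix.GeneralLinearGroup (Fin n) ℂ) =
            ⁅(c : Matrix.GeneralLinearGroup (Fin n) ℂ),
              (s : Matrix.GeneralLinearGroup (Fin n) ℂ)⁆ := rfl
        rw [hcoe]
        have := comm_est (c : Matrix.GeneralLinearGroup (Fin n) ℂ)
          (s : Matrix.GeneralLinearGroup (Fin n) ℂ) hc8 hs8
        calc ‖em ⁅(c : Matrix.GeneralLinearGroup (Fin n) ℂ),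
              (s : Matrix.GeneralLinearGroup (Fin n) ℂ)⁆ - 1‖
            ≤ (1 / 2) * ‖em (c : Matrix.GeneralLinearGroup (Fin n) ℂ) - 1‖ := this
          _ ≤ (1 / 2) * ((1 / 8) * (1 / 2) ^ k) := by linarith
          _ = (1 / 8) * (1 / 2) ^ (k + 1) := by ring
  -- discreteness at the identity
  obtain ⟨ε, hε, hdisc1⟩ := hdisc 1 Γ.one_mem
  obtain ⟨m, hm⟩ : ∃ m : ℕ, ((1 : ℝ) / 2) ^ m < ε :=
    exists_pow_lt_of_lt_one hε (by norm_num)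
  -- all weight-(m+1) iterated commutators are trivial
  apply isNilpotent_of_itC T hclos m
  intro x hx
  have hxb := hbound m x hx
  have hmm : (1 / 8 : ℝ) * (1 / 2) ^ m < ε := by
    have : (0:ℝ) < (1/2) ^ m := by positivity
    nlinarith
  have hxd : matrixOpNorm
      (((x : Matrix.GeneralLinearGroup (Fin n) ℂ) : Matrix (Fin n) (Fin n) ℂ) -
        ((1 : Matrix.GeneralLinearGroup (Fin n) ℂ) : Matrix (Fin n) (Fin n) ℂ)) < ε := by
    rw [Units.val_one, d_eq]
    linarith
  have hx1 : ((x : ↥Γ) : Matrix.GeneralLinearGroup (Fin n) ℂ) = 1 :=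
    hdisc1 _ x.2 hxd
  exact Subtype.ext hx1
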